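/- arXiv:1509.04538 — 2 statements merged into one kernel-verified Lean document; each statement's English description precedes it below -/
import Mathlib

section
/- Let A be an n×n real matrix with nonzero rows a₁ᵀ,…,aₙᵀ and trivial kernel (ker A = 0). Let G be a connected undirected simple graph on n vertices with Laplacian L, let Pᵢ = I − aᵢaᵢᵀ/(aᵢᵀaᵢ), P = diag(P₁,…,Pₙ), and L̄ = L ⊗ Iₙ. Then every complex eigenvalue of the n²×n² matrix P L̄ + I − P is real and strictly positive. -/
open Matrix
open scoped Kronecker

/-- The orthogonal projection `Pᵢ = I - aᵢaᵢᵀ/(aᵢᵀaᵢ)` onto the hyperplane `{z : aᵢᵀz = 0}`. -/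
noncomputable def projMat {n : ℕ} (a : Fin n → ℝ) : Matrix (Fin n) (Fin n) ℝ :=
  1 - (a ⬝ᵥ a)⁻¹ • vecMulVec a a

/-- The block-diagonal matrix `P = diag(P₁,…,Pₘ)`, acting on `(ℝⁿ)ᵐ ≅ ℝ^{mn}`
(indexed by pairs `(block, coordinate)`). -/
noncomputable def blockP {m n : ℕ} (a : Fin m → Fin n → ℝ) :
    Matrix (Fin m × Fin n) (Fin m × Fin n) ℝ :=
  Matrix.of fun p q => if p.1 = q.1 then projMat (a p.1) p.2 q.2 else 0

open Polynomial in
lemma charpoly_eval' {N R : Type*} [Fintype N] [DecidableEq N] [CommRing R]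
    (M : Matrix N N R) (r : R) :
    M.charpoly.eval r = (r • (1 : Matrix N N R) - M).det := by
  rw [Matrix.charpoly, eval_det, matPolyEquiv_charmatrix]
  simp only [eval_sub, eval_X, eval_C, smul_one_eq_diagonal, Matrix.scalar, RingHom.coe_comp,
    Function.comp_apply, Pi.constRingHom]
  rfl

lemma vecMulVec_mul_vecMulVec' {n : ℕ} (a : Fin n → ℝ) :
    vecMulVec a a * vecMulVec a a = (a ⬝ᵥ a) • vecMulVec a a := by
  ext i j
  simp only [mul_apply, vecMulVec_apply, Matrix.smul_apply, smul_eq_mul, dotProduct]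
  rw [Finset.sum_mul]
  exact Finset.sum_congr rfl fun k _ => by ring

lemma projMat_mul_self {n : ℕ} {a : Fin n → ℝ} (ha : a ≠ 0) :
    projMat a * projMat a = projMat a := by
  have hd : a ⬝ᵥ a ≠ 0 := fun h => ha (dotProduct_self_eq_zero.mp h)
  have h2 : ((a ⬝ᵥ a)⁻¹ • vecMulVec a a) * ((a ⬝ᵥ a)⁻¹ • vecMulVec a a)
      = (a ⬝ᵥ a)⁻¹ • vecMulVec a a := by
    rw [smul_mul_assoc, mul_smul_comm, vecMulVec_mul_vecMulVec', smul_smul, smul_smul,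
      mul_assoc, inv_mul_cancel₀ hd, mul_one]
  unfold projMat
  rw [sub_mul, mul_sub, mul_sub, h2]
  simp only [one_mul, mul_one]
  rw [sub_self, sub_zero]

lemma projMat_symm {n : ℕ} (a : Fin n → ℝ) : (projMat a)ᵀ = projMat a := by
  ext i j
  rcases eq_or_ne i j with h | h
  · subst h; simp [projMat]
  · simp [projMat, vecMulVec_apply, one_apply, h, Ne.symm h, mul_comm]

lemma blockP_transpose {m n : ℕ} (a : Fin m → Fin n → ℝ) : (blockP a)ᵀ = blockP a := by
  ext ⟨i, s⟩ ⟨j, t⟩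
  simp only [transpose_apply, blockP, of_apply]
  rcases eq_or_ne i j with h | h
  · subst h
    have h2 : projMat (a i) t s = projMat (a i) s t := by
      conv_lhs => rw [← projMat_symm (a i)]
      rfl
    simp [h2]
  · simp [h, Ne.symm h]

lemma blockP_mul_blockP {m n : ℕ} (a : Fin m → Fin n → ℝ) (ha : ∀ i, a i ≠ 0) :
    blockP a * blockP a = blockP a := by
  ext ⟨i, s⟩ ⟨j, t⟩
  rw [mul_apply, Fintype.sum_prod_type]
  simp only [blockP, of_apply, ite_mul, zero_mul, mul_ite, mul_zero]
  simp only [Finset.sum_ite_irrel, Finset.sum_const_zero, Finset.sum_ite_eq, Finset.mem_univ,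
    if_true]
  rcases eq_or_ne i j with h | h
  · subst h
    have h2 := congrFun (congrFun (projMat_mul_self (ha i)) s) t
    rw [mul_apply] at h2
    simpa using h2
  · simp [h]

lemma blockP_mulVec {m n : ℕ} (a : Fin m → Fin n → ℝ) (x : Fin m × Fin n → ℝ)
    (i : Fin m) (s : Fin n) :
    (blockP a *ᵥ x) (i, s) = (projMat (a i) *ᵥ fun t => x (i, t)) s := by
  simp only [mulVec, dotProduct, blockP, of_apply, Fintype.sum_prod_type, ite_mul, zero_mul]
  simp only [Finset.sum_ite_irrel, Finset.sum_const_zero, Finset.sum_ite_eq, Finset.mem_univ,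
    if_true]

lemma projMat_fixed {n : ℕ} {a w : Fin n → ℝ} (ha : a ≠ 0)
    (h : projMat a *ᵥ w = w) : a ⬝ᵥ w = 0 := by
  have hd : a ⬝ᵥ a ≠ 0 := fun h' => ha (dotProduct_self_eq_zero.mp h')
  obtain ⟨j, hj⟩ := Function.ne_iff.mp ha
  have h1 := congrFun h j
  have hW : (vecMulVec a a *ᵥ w) j = a j * (a ⬝ᵥ w) := by
    simp only [mulVec, dotProduct, vecMulVec_apply, Finset.mul_sum]
    exact Finset.sum_congr rfl fun k _ => by ring
  have h2 : (projMat a *ᵥ w) j = w j - (a ⬝ᵥ a)⁻¹ * (a j * (a ⬝ᵥ w)) := by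
    simp only [projMat, sub_mulVec, one_mulVec, smul_mulVec, Pi.sub_apply, Pi.smul_apply,
      smul_eq_mul, hW]
  rw [h2] at h1
  have h3 : (a ⬝ᵥ a)⁻¹ * (a j * (a ⬝ᵥ w)) = 0 := by linarith
  rcases mul_eq_zero.mp h3 with h4 | h4
  · exact absurd h4 (inv_ne_zero hd)
  · rcases mul_eq_zero.mp h4 with h5 | h5
    · exact absurd h5 hj
    · exact h5

lemma map_mulVec_star {α : Type*} [Fintype α] (R : Matrix α α ℝ) (v : α → ℂ) :
    (R.map (algebraMap ℝ ℂ)) *ᵥ (star v) = star ((R.map (algebraMap ℝ ℂ)) *ᵥ v) := by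
  ext i
  simp only [mulVec, dotProduct, Pi.star_apply, map_apply, star_sum, star_mul',
    Complex.star_def, Complex.conj_ofReal]
  simp [Complex.coe_algebraMap, Complex.conj_ofReal]

lemma dot_real_symm {α : Type*} [Fintype α] {R : Matrix α α ℝ} (hR : Rᵀ = R) (v : α → ℂ) :
    (star v ⬝ᵥ ((R.map (algebraMap ℝ ℂ)) *ᵥ v)).im = 0 := by
  set Rc := R.map (algebraMap ℝ ℂ) with hRcdef
  have hRc : Rcᵀ = Rc := by rw [hRcdef, ← Matrix.transpose_map, hR]
  have h : star (star v ⬝ᵥ (Rc *ᵥ v)) = star v ⬝ᵥ (Rc *ᵥ v) := by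
    calc star (star v ⬝ᵥ (Rc *ᵥ v)) = star (Rc *ᵥ v) ⬝ᵥ star (star v) :=
          (star_dotProduct_star _ _).symm
      _ = (Rc *ᵥ star v) ⬝ᵥ v := by rw [star_star, ← map_mulVec_star, hRcdef]
      _ = v ⬝ᵥ (Rc *ᵥ star v) := dotProduct_comm _ _
      _ = (v ᵥ* Rc) ⬝ᵥ star v := dotProduct_mulVec _ _ _
      _ = (Rcᵀ *ᵥ v) ⬝ᵥ star v := by rw [mulVec_transpose]
      _ = (Rc *ᵥ v) ⬝ᵥ star v := by rw [hRc]
      _ = star v ⬝ᵥ (Rc *ᵥ v) := dotProduct_comm _ _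
  exact Complex.conj_eq_iff_im.mp h

lemma kron_quad {m n : ℕ} (L : Matrix (Fin m) (Fin m) ℝ) (x : Fin m × Fin n → ℝ) :
    x ⬝ᵥ ((L ⊗ₖ (1 : Matrix (Fin n) (Fin n) ℝ)) *ᵥ x)
      = ∑ k : Fin n, (fun i => x (i, k)) ⬝ᵥ (L *ᵥ fun j => x (j, k)) := by
  simp only [dotProduct, mulVec, kroneckerMap_apply, Fintype.sum_prod_type, one_apply,
    mul_ite, mul_one, mul_zero, ite_mul, zero_mul, Finset.sum_ite_irrel, Finset.sum_const_zero,
    Finset.sum_ite_eq, Finset.mem_univ, if_true]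
  exact Finset.sum_comm

lemma eig_decomp {K : Type*} [Field K] {N : Type*} [Fintype N] [DecidableEq N]
    {P L : Matrix N N K} (hPP : P * P = P) {x : N → K} {r : K}
    (hx : (P * L + 1 - P) *ᵥ x = r • x) :
    r = 1 ∨ (P *ᵥ x = x ∧ r • x = P *ᵥ (L *ᵥ x)) := by
  set u := P *ᵥ x with hu
  have hPM : P * (P * L + 1 - P) = P * L := by
    rw [mul_sub, mul_add, mul_one, ← mul_assoc, hPP, add_sub_cancel_right]
  have h1 : r • u = P *ᵥ (L *ᵥ x) := by
    calc r • u = P *ᵥ (r • x) := (mulVec_smul _ _ _).symm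
      _ = P *ᵥ ((P * L + 1 - P) *ᵥ x) := by rw [hx]
      _ = (P * (P * L + 1 - P)) *ᵥ x := by rw [mulVec_mulVec]
      _ = (P * L) *ᵥ x := by rw [hPM]
      _ = P *ᵥ (L *ᵥ x) := (mulVec_mulVec _ _ _).symm
  have h1' : (P * L) *ᵥ x = r • u := by rw [← mulVec_mulVec, ← h1]
  have h2 : r • x = r • u + (x - u) := by
    rw [← hx, sub_mulVec, add_mulVec, one_mulVec, h1', add_sub_assoc]
  have h2' : r • x - r • u - (x - u) = 0 := by rw [h2]; abel
  have h3 : (r - 1) • (x - u) = 0 := by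
    rw [sub_smul, one_smul, smul_sub]
    exact h2'
  rcases smul_eq_zero.mp h3 with h | h
  · exact Or.inl (sub_eq_zero.mp h)
  · right
    have hux : u = x := by
      have := sub_eq_zero.mp h
      rw [this]
    exact ⟨hux, by rw [← h1, hux]⟩

/-- If `A` has nonzero rows and trivial kernel and `G` is connected, then
every complex eigenvalue (root of the characteristic polynomial) of `P L̄ + I - P` is real
and strictly positive. -/
theorem eigenvalues_real_positive
    {n : ℕ} (A : Matrix (Fin n) (Fin n) ℝ)
    (hrows : ∀ i, A i ≠ 0)
    (hker : ∀ x : Fin n → ℝ, A *ᵥ x = 0 → x = 0)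
    (G : SimpleGraph (Fin n)) [DecidableRel G.Adj] (hG : G.Connected) :
    ∀ μ : ℂ,
      ((blockP (fun i => A i) * (G.lapMatrix ℝ ⊗ₖ (1 : Matrix (Fin n) (Fin n) ℝ))
          + 1 - blockP (fun i => A i)).map (algebraMap ℝ ℂ)).charpoly.IsRoot μ →
      μ.im = 0 ∧ 0 < μ.re := by
  intro μ hroot
  classical
  set Pm : Matrix (Fin n × Fin n) (Fin n × Fin n) ℝ := blockP (fun i => A i) with hPmdef
  set Lb : Matrix (Fin n × Fin n) (Fin n × Fin n) ℝ :=
    G.lapMatrix ℝ ⊗ₖ (1 : Matrix (Fin n) (Fin n) ℝ) with hLbdef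
  have hPP : Pm * Pm = Pm := blockP_mul_blockP _ hrows
  have hPt : Pmᵀ = Pm := blockP_transpose _
  have hLt : Lbᵀ = Lb := by
    rw [hLbdef, ← kroneckerMap_transpose, transpose_one, (SimpleGraph.isSymm_lapMatrix ℝ G)]
  set f := algebraMap ℝ ℂ with hfdef
  set Pc := Pm.map f with hPcdef
  set Lc := Lb.map f with hLcdef
  have hMc : (Pm * Lb + 1 - Pm).map f = Pc * Lc + 1 - Pc := by
    simp only [← RingHom.mapMatrix_apply, map_sub, map_add, _root_.map_mul, _root_.map_one]
    simp only [RingHom.mapMatrix_apply]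
    rfl
  have hPPc : Pc * Pc = Pc := by
    simp only [hPcdef, ← RingHom.mapMatrix_apply, ← _root_.map_mul, hPP]
  have hPtc : Pcᵀ = Pc := by rw [hPcdef, ← Matrix.transpose_map, hPt]
  -- eigenvector over ℂ
  have hdet : (μ • (1 : Matrix (Fin n × Fin n) (Fin n × Fin n) ℂ)
      - (Pm * Lb + 1 - Pm).map f).det = 0 := by
    rw [← charpoly_eval']
    exact hroot
  obtain ⟨v, hv0, hv⟩ := Matrix.exists_mulVec_eq_zero_iff.mpr hdet
  have hvv : (Pc * Lc + 1 - Pc) *ᵥ v = μ • v := by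
    rw [← hMc]
    rw [sub_mulVec, smul_mulVec, one_mulVec, sub_eq_zero] at hv
    exact hv.symm
  -- the quadratic form quantities
  obtain ⟨p0, hp0⟩ := Function.ne_iff.mp hv0
  set s : ℝ := ∑ p, Complex.normSq (v p) with hsdef
  have hc : star v ⬝ᵥ v = (s : ℂ) := by
    rw [hsdef]
    push_cast
    exact Finset.sum_congr rfl fun p _ => by
      rw [Pi.star_apply, Complex.star_def, ← Complex.normSq_eq_conj_mul_self]
  have hs_pos : 0 < s := by
    refine Finset.sum_pos' (fun p _ => Complex.normSq_nonneg _) ⟨p0, Finset.mem_univ _, ?_⟩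
    exact Complex.normSq_pos.mpr hp0
  -- Phase A : μ is real
  have hμim : μ.im = 0 := by
    rcases eig_decomp hPPc hvv with h1 | ⟨hPv, hμv⟩
    · rw [h1]; rfl
    · have hd : μ * (s : ℂ) = star v ⬝ᵥ (Lc *ᵥ v) := by
        calc μ * (s : ℂ) = star v ⬝ᵥ (μ • v) := by
              rw [dotProduct_smul, hc, smul_eq_mul]
          _ = star v ⬝ᵥ (Pc *ᵥ (Lc *ᵥ v)) := by rw [← hμv]
          _ = (star v ᵥ* Pc) ⬝ᵥ (Lc *ᵥ v) := dotProduct_mulVec _ _ _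
          _ = (Pcᵀ *ᵥ star v) ⬝ᵥ (Lc *ᵥ v) := by rw [mulVec_transpose]
          _ = (Pc *ᵥ star v) ⬝ᵥ (Lc *ᵥ v) := by rw [hPtc]
          _ = star (Pc *ᵥ v) ⬝ᵥ (Lc *ᵥ v) := by rw [hPcdef, map_mulVec_star]
          _ = star v ⬝ᵥ (Lc *ᵥ v) := by rw [hPv]
      have him : (star v ⬝ᵥ (Lc *ᵥ v)).im = 0 := dot_real_symm hLt v
      have h := congrArg Complex.im hd
      rw [him, Complex.mul_im, Complex.ofReal_im, Complex.ofReal_re, mul_zero, zero_add] at h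
      exact (mul_eq_zero.mp h).resolve_right (ne_of_gt hs_pos)
  refine ⟨hμim, ?_⟩
  -- Phase B : real eigenvector
  set r : ℝ := μ.re with hrdef
  have hμr : μ = (r : ℂ) := Complex.ext rfl (by rw [hμim, Complex.ofReal_im])
  have hdetR : (r • (1 : Matrix (Fin n × Fin n) (Fin n × Fin n) ℝ)
      - (Pm * Lb + 1 - Pm)).det = 0 := by
    have hmap : (r • (1 : Matrix (Fin n × Fin n) (Fin n × Fin n) ℝ)
        - (Pm * Lb + 1 - Pm)).map f
        = μ • (1 : Matrix (Fin n × Fin n) (Fin n × Fin n) ℂ) - (Pm * Lb + 1 - Pm).map f := by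
      rw [hμr]
      simp only [← RingHom.mapMatrix_apply, map_sub]
      congr 1
      simp only [RingHom.mapMatrix_apply]
      ext p q
      by_cases hpq : p = q <;>
        simp [hpq, Matrix.smul_apply, Matrix.one_apply, hfdef]
    have h0 : Complex.ofReal ((r • (1 : Matrix (Fin n × Fin n) (Fin n × Fin n) ℝ)
        - (Pm * Lb + 1 - Pm)).det) = 0 := by
      rw [show (Complex.ofReal : ℝ → ℂ) = f from rfl]
      rw [RingHom.map_det, RingHom.mapMatrix_apply, hmap]
      exact hdet
    exact_mod_cast h0
  obtain ⟨x, hx0, hx⟩ := Matrix.exists_mulVec_eq_zero_iff.mpr hdetR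
  have hxx : (Pm * Lb + 1 - Pm) *ᵥ x = r • x := by
    rw [sub_mulVec, smul_mulVec, one_mulVec, sub_eq_zero] at hx
    exact hx.symm
  rw [hμr] at *
  rcases eig_decomp hPP hxx with h1 | ⟨hPx, hrx⟩
  · rw [h1]; norm_num
  · -- quadratic form over ℝ
    have hq : r * (x ⬝ᵥ x) = x ⬝ᵥ (Lb *ᵥ x) := by
      calc r * (x ⬝ᵥ x) = x ⬝ᵥ (r • x) := by rw [dotProduct_smul, smul_eq_mul]
        _ = x ⬝ᵥ (Pm *ᵥ (Lb *ᵥ x)) := by rw [← hrx]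
        _ = (x ᵥ* Pm) ⬝ᵥ (Lb *ᵥ x) := dotProduct_mulVec _ _ _
        _ = (Pmᵀ *ᵥ x) ⬝ᵥ (Lb *ᵥ x) := by rw [mulVec_transpose]
        _ = (Pm *ᵥ x) ⬝ᵥ (Lb *ᵥ x) := by rw [hPt]
        _ = x ⬝ᵥ (Lb *ᵥ x) := by rw [hPx]
    have hquad : x ⬝ᵥ (Lb *ᵥ x)
        = ∑ k : Fin n, (fun i => x (i, k)) ⬝ᵥ (G.lapMatrix ℝ *ᵥ fun j => x (j, k)) :=
      kron_quad _ _
    have htk : ∀ k : Fin n, 0 ≤ (fun i => x (i, k)) ⬝ᵥ (G.lapMatrix ℝ *ᵥ fun j => x (j, k)) := by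
      intro k
      have h := (SimpleGraph.posSemidef_lapMatrix ℝ G).dotProduct_mulVec_nonneg (fun i => x (i, k))
      simpa using h
    have hxx_nonneg : 0 ≤ x ⬝ᵥ x := by
      rw [dotProduct]
      exact Finset.sum_nonneg fun i _ => mul_self_nonneg _
    have hxx_pos : 0 < x ⬝ᵥ x :=
      lt_of_le_of_ne hxx_nonneg (fun h => hx0 (dotProduct_self_eq_zero.mp h.symm))
    have hr_nonneg : 0 ≤ r := by
      by_contra hneg
      push_neg at hneg
      have : r * (x ⬝ᵥ x) < 0 := mul_neg_of_neg_of_pos hneg hxx_pos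
      rw [hq, hquad] at this
      exact absurd (Finset.sum_nonneg fun k _ => htk k) (not_le.mpr this)
    have hr_ne : r ≠ 0 := by
      intro h0
      rw [h0, zero_mul] at hq
      have hsum0 : ∑ k : Fin n, (fun i => x (i, k)) ⬝ᵥ (G.lapMatrix ℝ *ᵥ fun j => x (j, k)) = 0 := by
        rw [← hquad, ← hq]
      have hzero : ∀ k : Fin n,
          (fun i => x (i, k)) ⬝ᵥ (G.lapMatrix ℝ *ᵥ fun j => x (j, k)) = 0 := by
        intro k
        exact (Finset.sum_eq_zero_iff_of_nonneg (fun k _ => htk k)).mp hsum0 k (Finset.mem_univ _)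
      have hconst : ∀ k i j : Fin n, x (i, k) = x (j, k) := by
        intro k i j
        have := hzero k
        rw [← Matrix.toLinearMap₂'_apply'] at this
        exact (SimpleGraph.lapMatrix_toLinearMap₂'_apply'_eq_zero_iff_forall_reachable
          G (fun i => x (i, k))).mp this i j (hG.preconnected i j)
      obtain ⟨p, hp⟩ := Function.ne_iff.mp hx0
      set z : Fin n → ℝ := fun k => x (p.1, k) with hzdef
      have hAz : A *ᵥ z = 0 := by
        ext i
        have hfix : projMat (A i) *ᵥ (fun t => x (i, t)) = fun t => x (i, t) := by
          ext t
          exact (blockP_mulVec _ x i t).symm.trans (congrFun hPx (i, t))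
        have h := projMat_fixed (hrows i) hfix
        have hzx : (fun t => x (i, t)) = z := by
          ext k
          rw [hzdef]
          exact hconst k i p.1
        rw [hzx] at h
        simpa [mulVec, dotProduct] using h
      have hz0 : z = 0 := hker z hAz
      apply hp
      have hxp : x p = z p.2 := rfl
      rw [hxp, hz0]
      rfl
    exact lt_of_le_of_ne hr_nonneg (Ne.symm hr_ne)
end

section
/- Let A be an m×n real matrix whose rows a₁ᵀ,…,aₘᵀ are linearly independent, let G be a connected undirected simple graph on m vertices with Laplacian L, let Pᵢ = I − aᵢaᵢᵀ/(aᵢᵀaᵢ), P = diag(P₁,…,Pₘ), and L̄ = L ⊗ Iₙ. Then the kernel of P L̄ is exactly the consensus subspace: P L̄ 𝒳 = 0 for 𝒳 = (x₁,…,xₘ) ∈ (ℝⁿ)ᵐ if and only if there exists q ∈ ℝⁿ with xᵢ = q for all i. Equivalently, if Pᵢ X L eᵢ = 0 for all i for a matrix X = [x₁ … xₘ], then all columns of X are identical. -/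
open Matrix
open scoped Kronecker

lemma vecMulVec_mulVec' {n : ℕ} (a b y : Fin n → ℝ) :
    vecMulVec a b *ᵥ y = (b ⬝ᵥ y) • a := by
  ext k
  simp [vecMulVec_apply, mulVec, dotProduct, Finset.sum_mul, Finset.mul_sum, mul_comm, mul_assoc,
    mul_left_comm]

lemma projMat_mulVec {n : ℕ} (a y : Fin n → ℝ) :
    projMat a *ᵥ y = y - ((a ⬝ᵥ a)⁻¹ * (a ⬝ᵥ y)) • a := by
  rw [projMat, sub_mulVec, one_mulVec, smul_mulVec, vecMulVec_mulVec', smul_smul]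

/-- If each `y i` is annihilated by `projMat (A i)` and the `y i` sum to zero,
then all `y i` vanish. -/
lemma key {m n : ℕ} (A : Matrix (Fin m) (Fin n) ℝ)
    (hA : LinearIndependent ℝ (fun i => A i)) (y : Fin m → Fin n → ℝ)
    (hproj : ∀ i, projMat (A i) *ᵥ y i = 0) (hsum : ∑ i, y i = 0) : ∀ i, y i = 0 := by
  set c : Fin m → ℝ := fun i => (A i ⬝ᵥ A i)⁻¹ * (A i ⬝ᵥ y i) with hc
  have hy : ∀ i, y i = c i • A i := by
    intro i
    have := hproj i
    rw [projMat_mulVec, sub_eq_zero] at this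
    exact this
  have hcsum : ∑ i, c i • A i = 0 := by
    rw [← hsum]; exact Finset.sum_congr rfl fun i _ => (hy i).symm
  have hc0 := Fintype.linearIndependent_iff.mp hA c hcsum
  intro i
  rw [hy i, hc0 i, zero_smul]

lemma lap_row_sum {m : ℕ} (G : SimpleGraph (Fin m)) [DecidableRel G.Adj] (i : Fin m) :
    ∑ j, G.lapMatrix ℝ i j = 0 := by
  have := congrFun (G.lapMatrix_mulVec_const_eq_zero (R := ℝ)) i
  simpa [mulVec, dotProduct] using this

lemma lap_col_sum {m : ℕ} (G : SimpleGraph (Fin m)) [DecidableRel G.Adj] (j : Fin m) :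
    ∑ i, G.lapMatrix ℝ i j = 0 := by
  have hs := G.isSymm_lapMatrix (R := ℝ)
  calc ∑ i, G.lapMatrix ℝ i j = ∑ i, G.lapMatrix ℝ j i := by
        refine Finset.sum_congr rfl fun i _ => ?_
        rw [← hs.apply i j]
    _ = 0 := lap_row_sum G j

lemma lap_ker {m : ℕ} (G : SimpleGraph (Fin m)) [DecidableRel G.Adj] (hG : G.Connected)
    (x : Fin m → ℝ) (hx : G.lapMatrix ℝ *ᵥ x = 0) : ∀ i j, x i = x j := by
  intro i j
  have := G.lapMatrix_mulVec_eq_zero_iff_forall_reachable.mp (by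
    exact hx)
  exact this i j (hG.preconnected i j)

lemma prod_entry {m n : ℕ} (A : Matrix (Fin m) (Fin n) ℝ)
    (G : SimpleGraph (Fin m)) [DecidableRel G.Adj] (i j : Fin m) (k l : Fin n) :
    (blockP (fun i => A i) * (G.lapMatrix ℝ ⊗ₖ (1 : Matrix (Fin n) (Fin n) ℝ)))
      (i, k) (j, l) = projMat (A i) k l * G.lapMatrix ℝ i j := by
  simp only [mul_apply, blockP, of_apply, kroneckerMap_apply, Fintype.sum_prod_type]
  rw [Finset.sum_eq_single i]
  · simp [Matrix.one_apply, mul_comm]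
  · intro r _ hr; simp [Ne.symm hr]
  · simp

/-- If the rows of `A` are linearly independent and `G` is connected, then
the kernel of `P L̄` is exactly the consensus subspace: `P L̄ 𝒳 = 0` iff all blocks of `𝒳` are
equal. Equivalently, if `Pᵢ X L eᵢ = 0` for all `i` then all columns of `X` are identical. -/
theorem ker_PL_eq_consensus
    {m n : ℕ} (A : Matrix (Fin m) (Fin n) ℝ)
    (hA : LinearIndependent ℝ (fun i => A i))
    (G : SimpleGraph (Fin m)) [DecidableRel G.Adj] (hG : G.Connected) :
    (∀ X : Fin m × Fin n → ℝ,
      (blockP (fun i => A i) * (G.lapMatrix ℝ ⊗ₖ (1 : Matrix (Fin n) (Fin n) ℝ))) *ᵥ X = 0 ↔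
        ∃ q : Fin n → ℝ, ∀ i k, X (i, k) = q k) ∧
    (∀ X : Matrix (Fin n) (Fin m) ℝ,
      (∀ i, projMat (A i) *ᵥ (fun k => (X * G.lapMatrix ℝ) k i) = 0) →
        ∀ i j k, X k i = X k j) := by
  haveI : Nonempty (Fin m) := hG.nonempty
  constructor
  · intro X
    set y : Fin m → Fin n → ℝ := fun i l => ∑ j, G.lapMatrix ℝ i j * X (j, l) with hy
    have hMv : ∀ i k,
        ((blockP (fun i => A i) * (G.lapMatrix ℝ ⊗ₖ (1 : Matrix (Fin n) (Fin n) ℝ))) *ᵥ X) (i, k)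
          = (projMat (A i) *ᵥ y i) k := by
      intro i k
      simp only [mulVec, dotProduct, Fintype.sum_prod_type, prod_entry, hy]
      rw [Finset.sum_comm]
      refine Finset.sum_congr rfl fun l _ => ?_
      rw [Finset.mul_sum]
      refine Finset.sum_congr rfl fun j _ => ?_
      ring
    constructor
    · intro h
      have hproj : ∀ i, projMat (A i) *ᵥ y i = 0 := by
        intro i; ext k
        rw [← hMv i k, h]; rfl
      have hsum : ∑ i, y i = 0 := by
        funext l
        simp only [Finset.sum_apply, hy, Pi.zero_apply]
        rw [Finset.sum_comm]
        refine Finset.sum_eq_zero fun j _ => ?_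
        rw [← Finset.sum_mul, lap_col_sum G j, zero_mul]
      have hy0 := key A hA y hproj hsum
      have hker : ∀ l i j, X (i, l) = X (j, l) := by
        intro l
        apply lap_ker G hG
        ext i
        have := congrFun (hy0 i) l
        simpa [hy, mulVec, dotProduct] using this
      exact ⟨fun k => X (Classical.arbitrary (Fin m), k),
        fun i k => hker k i (Classical.arbitrary (Fin m))⟩
    · rintro ⟨q, hq⟩
      ext ⟨i, k⟩
      rw [hMv i k]
      have : y i = 0 := by
        funext l
        simp only [hy, hq, Pi.zero_apply]
        rw [← Finset.sum_mul, lap_row_sum G i, zero_mul]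
      rw [this, mulVec_zero]; simp
  · intro X hproj i j k
    set y : Fin m → Fin n → ℝ := fun i k => (X * G.lapMatrix ℝ) k i with hy
    have hsum : ∑ i, y i = 0 := by
      funext k
      simp only [Finset.sum_apply, hy, mul_apply, Pi.zero_apply]
      rw [Finset.sum_comm]
      refine Finset.sum_eq_zero fun j _ => ?_
      rw [← Finset.mul_sum, lap_row_sum G j, mul_zero]
    have hy0 := key A hA y hproj hsum
    have hs := G.isSymm_lapMatrix (R := ℝ)
    have : G.lapMatrix ℝ *ᵥ X k = 0 := by
      ext i
      have := congrFun (hy0 i) k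
      simp only [hy, mul_apply, Pi.zero_apply] at this
      simp only [mulVec, dotProduct, Pi.zero_apply]
      rw [← this]
      refine Finset.sum_congr rfl fun j _ => ?_
      rw [← hs.apply j i]; ring
    exact lap_ker G hG (X k) this i j
end
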